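/- Let (τ,χ) be a tree decomposition of a graph G, let t ∈ V(τ), and let (X_1,X_2) be a separation of G with X = X_1 ∩ X_2. Construct for i = 1,2 the pair (τ^i, χ^i) where τ^i is a copy of τ and χ^i(t') = χ(t') ∩ X_i, augmented by inserting each x ∈ X \ χ(t) into all bags on the path from t (inclusive) to the bag nearest to t containing x (exclusive). Then joining τ^1 and τ^2 by an edge between the two copies of t, with the union of the bag functions, yields a tree decomposition of G, provided X ⊆ χ^i(t^i) for both i. -/

import Mathlib

open SimpleGraph

namespace Stmt15Aux

variable {ι : Type} (τ : SimpleGraph ι) (t₀ : ι)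

/-- The join of two copies of `τ` by an edge between the copies of `t₀`. -/
def join : SimpleGraph (ι ⊕ ι) :=
  SimpleGraph.fromRel (fun a b =>
    (∃ u v : ι, a = Sum.inl u ∧ b = Sum.inl v ∧ τ.Adj u v) ∨
    (∃ u v : ι, a = Sum.inr u ∧ b = Sum.inr v ∧ τ.Adj u v) ∨
    (a = Sum.inl t₀ ∧ b = Sum.inr t₀))

variable {τ t₀}

lemma adj_inl {u v : ι} (h : τ.Adj u v) :
    (join τ t₀).Adj (Sum.inl u) (Sum.inl v) := by
  rw [join, SimpleGraph.fromRel_adj]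
  exact ⟨by simp [h.ne], Or.inl (Or.inl ⟨u, v, rfl, rfl, h⟩)⟩

lemma adj_inr {u v : ι} (h : τ.Adj u v) :
    (join τ t₀).Adj (Sum.inr u) (Sum.inr v) := by
  rw [join, SimpleGraph.fromRel_adj]
  exact ⟨by simp [h.ne], Or.inl (Or.inr (Or.inl ⟨u, v, rfl, rfl, h⟩))⟩

lemma adj_cross : (join τ t₀).Adj (Sum.inl t₀) (Sum.inr t₀) := by
  rw [join, SimpleGraph.fromRel_adj]
  exact ⟨by simp, Or.inl (Or.inr (Or.inr ⟨rfl, rfl⟩))⟩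

/-- Homomorphism from `τ` into the left copy. -/
def homInl : τ →g join τ t₀ := ⟨Sum.inl, fun h => adj_inl h⟩

/-- Homomorphism from `τ` into the right copy. -/
def homInr : τ →g join τ t₀ := ⟨Sum.inr, fun h => adj_inr h⟩

@[simp] lemma homInl_apply (u : ι) : (homInl : τ →g join τ t₀) u = Sum.inl u := rfl
@[simp] lemma homInr_apply (u : ι) : (homInr : τ →g join τ t₀) u = Sum.inr u := rfl

lemma adj_cases {a b : ι ⊕ ι} (h : (join τ t₀).Adj a b) :
    (∃ u v, a = Sum.inl u ∧ b = Sum.inl v ∧ τ.Adj u v) ∨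
    (∃ u v, a = Sum.inr u ∧ b = Sum.inr v ∧ τ.Adj u v) ∨
    (a = Sum.inl t₀ ∧ b = Sum.inr t₀) ∨ (a = Sum.inr t₀ ∧ b = Sum.inl t₀) := by
  rw [join, SimpleGraph.fromRel_adj] at h
  obtain ⟨-, h | h⟩ := h
  · rcases h with ⟨u, v, rfl, rfl, huv⟩ | ⟨u, v, rfl, rfl, huv⟩ | ⟨rfl, rfl⟩
    exacts [Or.inl ⟨u, v, rfl, rfl, huv⟩, Or.inr (Or.inl ⟨u, v, rfl, rfl, huv⟩),
      Or.inr (Or.inr (Or.inl ⟨rfl, rfl⟩))]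
  · rcases h with ⟨u, v, rfl, rfl, huv⟩ | ⟨u, v, rfl, rfl, huv⟩ | ⟨rfl, rfl⟩
    exacts [Or.inl ⟨v, u, rfl, rfl, huv.symm⟩, Or.inr (Or.inl ⟨v, u, rfl, rfl, huv.symm⟩),
      Or.inr (Or.inr (Or.inr ⟨rfl, rfl⟩))]

lemma isLeft_eq {x y : ι ⊕ ι} (w : (join τ t₀).Walk x y)
    (he : s(Sum.inl t₀, Sum.inr t₀) ∉ w.edges) : x.isLeft = y.isLeft := by
  induction w with
  | nil => rfl
  | cons h p ih =>
    rw [Walk.edges_cons, List.mem_cons] at he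
    push_neg at he
    have h1 := ih he.2
    rcases adj_cases h with ⟨u, v, rfl, rfl, _⟩ | ⟨u, v, rfl, rfl, _⟩ | ⟨rfl, rfl⟩ | ⟨rfl, rfl⟩
    · simpa using h1
    · simpa using h1
    · exact absurd rfl he.1
    · exact absurd (Sym2.eq_swap) he.1

lemma liftLeft {x y : ι ⊕ ι} (w : (join τ t₀).Walk x y) :
    ∀ {u v : ι} (hx : x = Sum.inl u) (hy : y = Sum.inl v),
      s(Sum.inl t₀, Sum.inr t₀) ∉ w.edges →
      ∃ w' : τ.Walk u v, w'.map homInl = w.copy hx hy := by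
  induction w with
  | nil =>
    rintro u v rfl hy he
    obtain rfl : u = v := Sum.inl.inj hy
    exact ⟨Walk.nil, by simp⟩
  | @cons a b c h p ih =>
    rintro u v rfl rfl he
    rw [Walk.edges_cons, List.mem_cons] at he
    push_neg at he
    rcases adj_cases h with ⟨u', v', hu', rfl, huv⟩ | ⟨u', v', hu', _, _⟩ | ⟨hu', rfl⟩ | ⟨hu', _⟩
    · obtain rfl : u = u' := Sum.inl.inj hu'
      obtain ⟨w', hw'⟩ := ih rfl rfl he.2
      rw [Walk.copy_rfl_rfl] at hw'
      exact ⟨Walk.cons huv w', by rw [Walk.copy_rfl_rfl, Walk.map_cons, hw']; rfl⟩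
    · exact absurd hu' (by simp)
    · obtain rfl : u = t₀ := Sum.inl.inj hu'
      exact absurd rfl he.1
    · exact absurd hu' (by simp)

lemma liftRight {x y : ι ⊕ ι} (w : (join τ t₀).Walk x y) :
    ∀ {u v : ι} (hx : x = Sum.inr u) (hy : y = Sum.inr v),
      s(Sum.inl t₀, Sum.inr t₀) ∉ w.edges →
      ∃ w' : τ.Walk u v, w'.map homInr = w.copy hx hy := by
  induction w with
  | nil =>
    rintro u v rfl hy he
    obtain rfl : u = v := Sum.inr.inj hy
    exact ⟨Walk.nil, by simp⟩
  | @cons a b c h p ih =>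
    rintro u v rfl rfl he
    rw [Walk.edges_cons, List.mem_cons] at he
    push_neg at he
    rcases adj_cases h with ⟨u', v', hu', _, _⟩ | ⟨u', v', hu', rfl, huv⟩ | ⟨hu', _⟩ | ⟨hu', rfl⟩
    · exact absurd hu' (by simp)
    · obtain rfl : u = u' := Sum.inr.inj hu'
      obtain ⟨w', hw'⟩ := ih rfl rfl he.2
      rw [Walk.copy_rfl_rfl] at hw'
      exact ⟨Walk.cons huv w', by rw [Walk.copy_rfl_rfl, Walk.map_cons, hw']; rfl⟩
    · exact absurd hu' (by simp)
    · obtain rfl : u = t₀ := Sum.inr.inj hu'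
      exact absurd Sym2.eq_swap he.1

lemma join_isTree (ht : τ.IsTree) : (join τ t₀).IsTree := by
  classical
  constructor
  · rw [connected_iff]
    refine ⟨?_, ⟨Sum.inl t₀⟩⟩
    have hreach : ∀ x : ι ⊕ ι, (join τ t₀).Reachable x (Sum.inl t₀) := by
      intro x
      rcases x with u | u
      · exact Reachable.map homInl (ht.isConnected.preconnected u t₀)
      · exact (Reachable.map homInr (ht.isConnected.preconnected u t₀)).trans
          adj_cross.symm.reachable
    exact fun x y => (hreach x).trans (hreach y).symm
  · intro a c hc
    by_cases hmem : s(Sum.inl t₀, Sum.inr t₀) ∈ c.edges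
    · have hl : Sum.inl t₀ ∈ c.support := c.fst_mem_support_of_mem_edges hmem
      have hcyc' := hc.rotate hl
      have hmem' : s(Sum.inl t₀, Sum.inr t₀) ∈ (c.rotate _ hl).edges :=
        (c.rotate_edges _ hl).mem_iff.mpr hmem
      have hr : Sum.inr t₀ ∈ (c.rotate _ hl).support :=
        Walk.snd_mem_support_of_mem_edges _ hmem'
      have hnodup : ((c.rotate _ hl).edges).Nodup := hcyc'.edges_nodup
      have h1 : s(Sum.inl t₀, Sum.inr t₀) ∈ ((c.rotate _ hl).takeUntil _ hr).edges := by
        by_contra hq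
        simpa using isLeft_eq _ hq
      have h2 : s(Sum.inl t₀, Sum.inr t₀) ∈ ((c.rotate _ hl).dropUntil _ hr).edges := by
        by_contra hq
        simpa using isLeft_eq _ hq
      rw [← (c.rotate _ hl).take_spec hr, Walk.edges_append] at hnodup
      exact (List.nodup_append.mp hnodup).2.2 _ h1 _ h2 rfl
    · rcases a with u | u
      · obtain ⟨w', hw'⟩ := liftLeft c rfl rfl hmem
        rw [Walk.copy_rfl_rfl] at hw'
        rw [← hw'] at hc
        exact ht.IsAcyclic w'
          ((Walk.map_isCycle_iff_of_injective (fun a b hab => Sum.inl_injective hab)).mp hc)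
      · obtain ⟨w', hw'⟩ := liftRight c rfl rfl hmem
        rw [Walk.copy_rfl_rfl] at hw'
        rw [← hw'] at hc
        exact ht.IsAcyclic w'
          ((Walk.map_isCycle_iff_of_injective (fun a b hab => Sum.inr_injective hab)).mp hc)

/-- A walk whose support lies in `s` yields reachability in the induced graph. -/
lemma reach_induce {W : Type} {G : SimpleGraph W} {s : Set W} :
    ∀ {a b : W} (w : G.Walk a b), (∀ x ∈ w.support, x ∈ s) →
      ∀ (ha : a ∈ s) (hb : b ∈ s), (G.induce s).Reachable ⟨a, ha⟩ ⟨b, hb⟩ := by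
  intro a b w
  induction w with
  | nil => intro _ ha hb; rfl
  | @cons a c b h p ih =>
    intro hw ha hb
    have hsup : ∀ x ∈ p.support, x ∈ s := by
      intro x hx
      apply hw
      rw [Walk.support_cons]
      exact List.mem_cons_of_mem _ hx
    have hcs : c ∈ s := hsup c p.start_mem_support
    have hadj : (G.induce s).Adj ⟨a, ha⟩ ⟨c, hcs⟩ := by simpa using h
    exact hadj.reachable.trans (ih hsup hcs hb)

lemma reach_induce_mono {W : Type} {G : SimpleGraph W} {s t : Set W} (hst : s ⊆ t)
    {a b : ↑s} (h : (G.induce s).Reachable a b) :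
    (G.induce t).Reachable ⟨a, hst a.2⟩ ⟨b, hst b.2⟩ :=
  h.map (G.induceHomOfLE hst).toHom

lemma reach_induce_map {W W' : Type} {G : SimpleGraph W} {H : SimpleGraph W'}
    (f : G →g H) {s : Set W} {t : Set W'} (hst : ∀ x ∈ s, f x ∈ t)
    {a b : ↑s} (hr : (G.induce s).Reachable a b) :
    (H.induce t).Reachable ⟨f a, hst _ a.2⟩ ⟨f b, hst _ b.2⟩ :=
  hr.map (SimpleGraph.induceHom f hst)

end Stmt15Aux



/-- `(τ, χ)` is a tree decomposition of the graph `G`. -/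
def IsTreeDecomp {V ι : Type} (G : SimpleGraph V) (τ : SimpleGraph ι) (χ : ι → Set V) : Prop :=
  τ.IsTree ∧
  (∀ v : V, ∃ t, v ∈ χ t) ∧
  (∀ u v : V, G.Adj u v → ∃ t, u ∈ χ t ∧ v ∈ χ t) ∧
  (∀ v : V, (τ.induce {t | v ∈ χ t}).Connected)

/-- `u` lies on the (unique) path between `a` and `b` in `τ`:
every walk from `a` to `b` passes through `u`. -/
def Between {ι : Type} (τ : SimpleGraph ι) (a b u : ι) : Prop :=
  ∀ w : τ.Walk a b, u ∈ w.support

/-- Splitting a tree decomposition `(τ, χ)` of `G` along a separation `(X₁, X₂)` at a node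
`t₀`.  For `i = 1, 2` one takes a copy of `τ` with bags `χ(t') ∩ X_i`, augmented by inserting
each `x ∈ (X₁ ∩ X₂) \ χ(t₀)` into all bags on the path from `t₀` (inclusive) to the node
`tx x` nearest to `t₀` whose bag contains `x` (exclusive).  Joining the two copies by an edge
between the copies of `t₀` yields a tree decomposition of `G`, provided
`X₁ ∩ X₂` is contained in both copies of the bag of `t₀`. -/
theorem stmt_15 {V ι : Type} (G : SimpleGraph V) (τ : SimpleGraph ι) (χ : ι → Set V)
    (h : IsTreeDecomp G τ χ) (t₀ : ι) (X₁ X₂ : Set V)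
    (hcover : X₁ ∪ X₂ = Set.univ)
    (hsep : ∀ a b : V, G.Adj a b → a ∈ X₁ \ X₂ → b ∉ X₂ \ X₁)
    (tx : V → ι)
    (htx : ∀ x ∈ (X₁ ∩ X₂) \ χ t₀,
      x ∈ χ (tx x) ∧ ∀ t' : ι, x ∈ χ t' → Between τ t₀ t' (tx x))
    (χ' : (ι ⊕ ι) → Set V)
    (hχ'1 : ∀ u : ι, χ' (Sum.inl u) =
      (χ u ∩ X₁) ∪ {x | x ∈ (X₁ ∩ X₂) \ χ t₀ ∧ Between τ t₀ (tx x) u ∧ u ≠ tx x})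
    (hχ'2 : ∀ u : ι, χ' (Sum.inr u) =
      (χ u ∩ X₂) ∪ {x | x ∈ (X₁ ∩ X₂) \ χ t₀ ∧ Between τ t₀ (tx x) u ∧ u ≠ tx x})
    (hX1 : X₁ ∩ X₂ ⊆ χ' (Sum.inl t₀)) (hX2 : X₁ ∩ X₂ ⊆ χ' (Sum.inr t₀)) :
    IsTreeDecomp G
      (SimpleGraph.fromRel (fun a b =>
        (∃ u v : ι, a = Sum.inl u ∧ b = Sum.inl v ∧ τ.Adj u v) ∨
        (∃ u v : ι, a = Sum.inr u ∧ b = Sum.inr v ∧ τ.Adj u v) ∨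
        (a = Sum.inl t₀ ∧ b = Sum.inr t₀)))
      χ' := by
  classical
  show IsTreeDecomp G (Stmt15Aux.join τ t₀) χ'
  obtain ⟨htree, hcov, hedge, hconn⟩ := h
  have hXmem : ∀ v : V, v ∈ X₁ ∨ v ∈ X₂ := by
    intro v
    have : v ∈ X₁ ∪ X₂ := by rw [hcover]; trivial
    exact this
  have memL : ∀ (v : V) (u : ι), v ∈ χ' (Sum.inl u) ↔
      (v ∈ χ u ∧ v ∈ X₁) ∨
      (v ∈ (X₁ ∩ X₂) \ χ t₀ ∧ Between τ t₀ (tx v) u ∧ u ≠ tx v) := by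
    intro v u
    rw [hχ'1]
    simp only [Set.mem_union, Set.mem_inter_iff, Set.mem_setOf_eq]
  have memR : ∀ (v : V) (u : ι), v ∈ χ' (Sum.inr u) ↔
      (v ∈ χ u ∧ v ∈ X₂) ∨
      (v ∈ (X₁ ∩ X₂) \ χ t₀ ∧ Between τ t₀ (tx v) u ∧ u ≠ tx v) := by
    intro v u
    rw [hχ'2]
    simp only [Set.mem_union, Set.mem_inter_iff, Set.mem_setOf_eq]
  refine ⟨Stmt15Aux.join_isTree htree, ?_, ?_, ?_⟩
  · -- cover
    intro v
    obtain ⟨t, ht⟩ := hcov v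
    rcases hXmem v with h1 | h2
    · exact ⟨Sum.inl t, (memL v t).mpr (Or.inl ⟨ht, h1⟩)⟩
    · exact ⟨Sum.inr t, (memR v t).mpr (Or.inl ⟨ht, h2⟩)⟩
  · -- edges
    intro a b hab
    obtain ⟨t, hat, hbt⟩ := hedge a b hab
    by_cases ha1 : a ∈ X₁
    · by_cases hb1 : b ∈ X₁
      · exact ⟨Sum.inl t, (memL a t).mpr (Or.inl ⟨hat, ha1⟩),
          (memL b t).mpr (Or.inl ⟨hbt, hb1⟩)⟩
      · have hb2 : b ∈ X₂ := (hXmem b).resolve_left hb1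
        have ha2 : a ∈ X₂ := by
          by_contra ha2
          exact hsep a b hab ⟨ha1, ha2⟩ ⟨hb2, hb1⟩
        exact ⟨Sum.inr t, (memR a t).mpr (Or.inl ⟨hat, ha2⟩),
          (memR b t).mpr (Or.inl ⟨hbt, hb2⟩)⟩
    · have ha2 : a ∈ X₂ := (hXmem a).resolve_left ha1
      by_cases hb2 : b ∈ X₂
      · exact ⟨Sum.inr t, (memR a t).mpr (Or.inl ⟨hat, ha2⟩),
          (memR b t).mpr (Or.inl ⟨hbt, hb2⟩)⟩
      · have hb1 : b ∈ X₁ := (hXmem b).resolve_right hb2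
        exact absurd ⟨ha2, ha1⟩ (hsep b a hab.symm ⟨hb1, hb2⟩)
  · -- bags are connected
    intro v
    set S : Set (ι ⊕ ι) := {s | v ∈ χ' s} with hS
    set A : Set ι := {t | v ∈ χ t} with hA
    have hAconn : (τ.induce A).Connected := hconn v
    by_cases hv1 : v ∈ X₁
    · by_cases hv2 : v ∈ X₂
      · -- v ∈ X₁ ∩ X₂
        by_cases hv0 : v ∈ χ t₀
        · -- S = inl '' A ∪ inr '' A with t₀ ∈ A
          have hSl : ∀ u : ι, Sum.inl u ∈ S ↔ u ∈ A := by
            intro u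
            rw [hS, Set.mem_setOf_eq, memL]
            constructor
            · rintro (⟨h1, -⟩ | ⟨⟨-, hn⟩, -⟩)
              · exact h1
              · exact absurd hv0 hn
            · exact fun hu => Or.inl ⟨hu, hv1⟩
          have hSr : ∀ u : ι, Sum.inr u ∈ S ↔ u ∈ A := by
            intro u
            rw [hS, Set.mem_setOf_eq, memR]
            constructor
            · rintro (⟨h1, -⟩ | ⟨⟨-, hn⟩, -⟩)
              · exact h1
              · exact absurd hv0 hn
            · exact fun hu => Or.inl ⟨hu, hv2⟩
          have ht₀ : t₀ ∈ A := hv0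
          rw [connected_iff]
          refine ⟨?_, ⟨⟨Sum.inl t₀, (hSl t₀).mpr ht₀⟩⟩⟩
          have hto : ∀ z : ↑S, ((Stmt15Aux.join τ t₀).induce S).Reachable z
              ⟨Sum.inl t₀, (hSl t₀).mpr ht₀⟩ := by
            rintro ⟨zl | zr, hz⟩
            · exact Stmt15Aux.reach_induce_map Stmt15Aux.homInl
                (fun x hx => (hSl x).mpr hx)
                (hAconn.preconnected ⟨zl, (hSl zl).mp hz⟩ ⟨t₀, ht₀⟩)
            · have hcr : ((Stmt15Aux.join τ t₀).induce S).Adj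
                  ⟨Sum.inr t₀, (hSr t₀).mpr ht₀⟩ ⟨Sum.inl t₀, (hSl t₀).mpr ht₀⟩ := by
                simpa using Stmt15Aux.adj_cross.symm
              exact (Stmt15Aux.reach_induce_map Stmt15Aux.homInr
                  (fun x hx => (hSr x).mpr hx)
                  (hAconn.preconnected ⟨zr, (hSr zr).mp hz⟩ ⟨t₀, ht₀⟩)).trans hcr.reachable
          exact fun x y => (hto x).trans (hto y).symm
        · -- v ∉ χ t₀ : augmented bags
          have hvX : v ∈ (X₁ ∩ X₂) \ χ t₀ := ⟨⟨hv1, hv2⟩, hv0⟩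
          have htxv : v ∈ χ (tx v) := (htx v hvX).1
          obtain ⟨q⟩ := htree.isConnected.preconnected t₀ (tx v)
          set p : τ.Walk t₀ (tx v) := q.bypass with hpdef
          have hp : p.IsPath := q.bypass_isPath
          have hPB : ∀ u ∈ p.support, Between τ t₀ (tx v) u := by
            intro u hu w
            have hpq : (⟨p, hp⟩ : τ.Path t₀ (tx v)) = ⟨w.bypass, w.bypass_isPath⟩ :=
              htree.IsAcyclic.path_unique _ _
            have hpw : p = w.bypass := congrArg Subtype.val hpq
            exact w.support_bypass_subset (hpw ▸ hu)
          set C : Set ι := A ∪ {u | Between τ t₀ (tx v) u ∧ u ≠ tx v} with hC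
          have hSl : ∀ u : ι, Sum.inl u ∈ S ↔ u ∈ C := by
            intro u
            rw [hS, Set.mem_setOf_eq, memL, hC]
            constructor
            · rintro (⟨h1, -⟩ | ⟨-, hb, hne⟩)
              · exact Or.inl h1
              · exact Or.inr ⟨hb, hne⟩
            · rintro (hu | ⟨hb, hne⟩)
              · exact Or.inl ⟨hu, hv1⟩
              · exact Or.inr ⟨hvX, hb, hne⟩
          have hSr : ∀ u : ι, Sum.inr u ∈ S ↔ u ∈ C := by
            intro u
            rw [hS, Set.mem_setOf_eq, memR, hC]
            constructor
            · rintro (⟨h1, -⟩ | ⟨-, hb, hne⟩)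
              · exact Or.inl h1
              · exact Or.inr ⟨hb, hne⟩
            · rintro (hu | ⟨hb, hne⟩)
              · exact Or.inl ⟨hu, hv2⟩
              · exact Or.inr ⟨hvX, hb, hne⟩
          have hpC : ∀ x ∈ p.support, x ∈ C := by
            intro x hx
            by_cases hxt : x = tx v
            · subst hxt; exact Or.inl htxv
            · exact Or.inr ⟨hPB x hx, hxt⟩
          have ht₀C : t₀ ∈ C := hpC t₀ p.start_mem_support
          have htxC : tx v ∈ C := Or.inl htxv
          have hreachC : ∀ u (hu : u ∈ C),
              (τ.induce C).Reachable ⟨u, hu⟩ ⟨t₀, ht₀C⟩ := by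
            intro u hu
            rcases hu with huA | huB
            · have h1 : (τ.induce A).Reachable ⟨u, huA⟩ ⟨tx v, htxv⟩ :=
                hAconn.preconnected _ _
              have h2 := Stmt15Aux.reach_induce_mono
                (fun x hx => (Or.inl hx : x ∈ C)) h1
              exact h2.trans (Stmt15Aux.reach_induce p hpC ht₀C htxC).symm
            · have hup : u ∈ p.support := huB.1 p
              exact (Stmt15Aux.reach_induce (p.takeUntil u hup)
                (fun x hx => hpC x (p.support_takeUntil_subset hup hx)) ht₀C
                (hpC u hup)).symm
          rw [connected_iff]
          refine ⟨?_, ⟨⟨Sum.inl t₀, (hSl t₀).mpr ht₀C⟩⟩⟩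
          have hto : ∀ z : ↑S, ((Stmt15Aux.join τ t₀).induce S).Reachable z
              ⟨Sum.inl t₀, (hSl t₀).mpr ht₀C⟩ := by
            rintro ⟨zl | zr, hz⟩
            · exact Stmt15Aux.reach_induce_map Stmt15Aux.homInl
                (fun x hx => (hSl x).mpr hx) (hreachC zl ((hSl zl).mp hz))
            · have hcr : ((Stmt15Aux.join τ t₀).induce S).Adj
                  ⟨Sum.inr t₀, (hSr t₀).mpr ht₀C⟩ ⟨Sum.inl t₀, (hSl t₀).mpr ht₀C⟩ := by
                simpa using Stmt15Aux.adj_cross.symm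
              exact (Stmt15Aux.reach_induce_map Stmt15Aux.homInr
                  (fun x hx => (hSr x).mpr hx) (hreachC zr ((hSr zr).mp hz))).trans
                hcr.reachable
          exact fun x y => (hto x).trans (hto y).symm
      · -- v ∈ X₁ \ X₂
        have hSl : ∀ u : ι, Sum.inl u ∈ S ↔ u ∈ A := by
          intro u
          rw [hS, Set.mem_setOf_eq, memL]
          constructor
          · rintro (⟨h1, -⟩ | ⟨⟨⟨-, hx2⟩, -⟩, -⟩)
            · exact h1
            · exact absurd hx2 hv2
          · exact fun hu => Or.inl ⟨hu, hv1⟩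
        have hSr : ∀ u : ι, Sum.inr u ∉ S := by
          intro u hu
          rw [hS, Set.mem_setOf_eq, memR] at hu
          rcases hu with ⟨-, h2⟩ | ⟨⟨⟨-, hx2⟩, -⟩, -⟩
          · exact hv2 h2
          · exact hv2 hx2
        obtain ⟨t, ht⟩ := hcov v
        rw [connected_iff]
        refine ⟨?_, ⟨⟨Sum.inl t, (hSl t).mpr ht⟩⟩⟩
        have hto : ∀ z : ↑S, ((Stmt15Aux.join τ t₀).induce S).Reachable z
            ⟨Sum.inl t, (hSl t).mpr ht⟩ := by
          rintro ⟨zl | zr, hz⟩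
          · exact Stmt15Aux.reach_induce_map Stmt15Aux.homInl
              (fun x hx => (hSl x).mpr hx)
              (hAconn.preconnected ⟨zl, (hSl zl).mp hz⟩ ⟨t, ht⟩)
          · exact absurd hz (hSr zr)
        exact fun x y => (hto x).trans (hto y).symm
    · -- v ∈ X₂ \ X₁
      have hv2 : v ∈ X₂ := (hXmem v).resolve_left hv1
      have hSr : ∀ u : ι, Sum.inr u ∈ S ↔ u ∈ A := by
        intro u
        rw [hS, Set.mem_setOf_eq, memR]
        constructor
        · rintro (⟨h1, -⟩ | ⟨⟨⟨hx1, -⟩, -⟩, -⟩)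
          · exact h1
          · exact absurd hx1 hv1
        · exact fun hu => Or.inl ⟨hu, hv2⟩
      have hSl : ∀ u : ι, Sum.inl u ∉ S := by
        intro u hu
        rw [hS, Set.mem_setOf_eq, memL] at hu
        rcases hu with ⟨-, h1⟩ | ⟨⟨⟨hx1, -⟩, -⟩, -⟩
        · exact hv1 h1
        · exact hv1 hx1
      obtain ⟨t, ht⟩ := hcov v
      rw [connected_iff]
      refine ⟨?_, ⟨⟨Sum.inr t, (hSr t).mpr ht⟩⟩⟩
      have hto : ∀ z : ↑S, ((Stmt15Aux.join τ t₀).induce S).Reachable z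
          ⟨Sum.inr t, (hSr t).mpr ht⟩ := by
        rintro ⟨zl | zr, hz⟩
        · exact absurd hz (hSl zl)
        · exact Stmt15Aux.reach_induce_map Stmt15Aux.homInr
            (fun x hx => (hSr x).mpr hx)
            (hAconn.preconnected ⟨zr, (hSr zr).mp hz⟩ ⟨t, ht⟩)
      exact fun x y => (hto x).trans (hto y).symm
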